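/- For every finite type σ over Ω and every countable ordinal α, the iteration functional Iter_α^σ is hereditarily monotone, i.e., Iter_α^σ ∈ Ω^mon_{(σ→σ)→(σ→σ)}: it maps hereditarily monotone f to hereditarily monotone Iter_α f, and Iter_α f ≤ Iter_α f' whenever f ≤ f' are hereditarily monotone. -/

import Mathlib

/-!  Framework: finite type structure over Ω = countable ordinals,
     limsup/liminf, transfinite iteration functionals, hereditarily
     positive and hereditarily monotone functionals. -/

noncomputable section
namespace IterOrd

open Ordinal

theorem omega1_pos : (0 : Ordinal) < ω₁ := Ordinal.omega0_pos.trans Ordinal.omega0_lt_omega_one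

/-- `Om` is Ω, the set of countable ordinals (ordinals `< ω₁`). -/
abbrev Om : Type 1 := {o : Ordinal // o < ω₁}

/-- Infimum of a subset of Ω (the minimum for nonempty sets; `0` for `∅`). -/
def infOm (s : Set Om) : Om :=
  ⟨sInf (Subtype.val '' s), by
    rcases (Subtype.val '' s).eq_empty_or_nonempty with h | h
    · rw [h]; simpa using omega1_pos
    · obtain ⟨x, _, he⟩ := csInf_mem h
      exact he ▸ x.2⟩

/-- Supremum of a subset of Ω.  Whenever the supremum of the set exists in Ω
(in particular for every countable subset, by regularity of `ω₁`) this is the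
genuine supremum; otherwise it takes a junk value. -/
def supOm (s : Set Om) : Om :=
  if h : sSup (Subtype.val '' s) < ω₁ then ⟨sSup (Subtype.val '' s), h⟩ else ⟨0, omega1_pos⟩

/-- Finite types over the base type `o` (interpreted as Ω). -/
inductive Ty : Type
  | base : Ty
  | arrow : Ty → Ty → Ty
deriving DecidableEq

/-- The full type structure over Ω: `El base = Ω` and
`El (arrow σ τ)` is the set of all functions `El σ → El τ`. -/
@[reducible] def El : Ty → Type 1
  | .base => Om
  | .arrow σ τ => El σ → El τ

/-- The order on each `El σ`: the ordinal order at base type, pointwise at arrow types. -/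
def Le : (σ : Ty) → El σ → El σ → Prop
  | .base => fun x y => x ≤ y
  | .arrow σ τ => fun f g => ∀ x : El σ, Le τ (f x) (g x)

/-- Suprema, computed pointwise at function types. -/
def supEl : (σ : Ty) → Set (El σ) → El σ
  | .base => supOm
  | .arrow σ τ => fun S (x : El σ) => supEl τ ((fun f : El (.arrow σ τ) => f x) '' S)

/-- Infima, computed pointwise at function types. -/
def infEl : (σ : Ty) → Set (El σ) → El σ
  | .base => infOm
  | .arrow σ τ => fun S (x : El σ) => infEl τ ((fun f : El (.arrow σ τ) => f x) '' S)

/-- `limsup_{ξ→ζ} f ξ = inf_{γ<ζ} sup_{γ≤ξ<ζ} f ξ`. -/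
def limsupEl (σ : Ty) (ζ : Ordinal) (f : ∀ ξ : Ordinal, ξ < ζ → El σ) : El σ :=
  infEl σ {y | ∃ γ, ∃ _ : γ < ζ, y = supEl σ {z | ∃ ξ, ∃ h : ξ < ζ, γ ≤ ξ ∧ z = f ξ h}}

/-- `liminf_{ξ→ζ} f ξ = sup_{γ<ζ} inf_{γ≤ξ<ζ} f ξ`. -/
def liminfEl (σ : Ty) (ζ : Ordinal) (f : ∀ ξ : Ordinal, ξ < ζ → El σ) : El σ :=
  supEl σ {y | ∃ γ, ∃ _ : γ < ζ, y = infEl σ {z | ∃ ξ, ∃ h : ξ < ζ, γ ≤ ξ ∧ z = f ξ h}}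

/-- `limsup` of a ζ-indexed sequence of ordinals. -/
def oLimsup (ζ : Ordinal) (a : Ordinal → Ordinal) : Ordinal :=
  sInf {s | ∃ γ, γ < ζ ∧ s = sSup (a '' {ξ | γ ≤ ξ ∧ ξ < ζ})}

/-- `liminf` of a ζ-indexed sequence of ordinals. -/
def oLiminf (ζ : Ordinal) (a : Ordinal → Ordinal) : Ordinal :=
  sSup {s | ∃ γ, γ < ζ ∧ s = sInf (a '' {ξ | γ ≤ ξ ∧ ξ < ζ})}

/-- The α-iteration functional of type σ:
`Iter 0 f x = x`, `Iter (α+1) f x = f (Iter α f x)`, and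
`Iter μ f x = limsup_{ξ→μ} Iter ξ f x` for limit μ. -/
def Iter (σ : Ty) (α : Ordinal) : (El σ → El σ) → El σ → El σ :=
  Ordinal.limitRecOn (motive := fun _ => (El σ → El σ) → El σ → El σ) α
    (fun _ x => x)
    (fun _ ih f x => f (ih f x))
    (fun μ _ ih f x => limsupEl σ μ (fun ξ h => ih ξ h f x))

/-- The pair (hereditarily positive, ≤hp), defined simultaneously by recursion on the type.
Every element of `Ω` and of `Ω_{ρ→τ}` with `ρ ≠ τ` is h.p., and `≤hp` there is `≤`;
`f : Ω_{τ→τ}` is h.p. iff it preserves h.p., is inflationary on h.p. arguments and is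
monotone (w.r.t. `≤hp`) on h.p. arguments; `f ≤hp f'` on `Ω_{τ→τ}` iff `f x ≤hp f' x`
for every h.p. `x`. -/
def HPaux : (σ : Ty) → (El σ → Prop) × (El σ → El σ → Prop)
  | .base => ⟨fun _ => True, fun x y => x ≤ y⟩
  | .arrow ρ τ =>
      ⟨fun f =>
        if h : ρ = τ then
          (∀ x, (HPaux ρ).1 x → (HPaux τ).1 (f x)) ∧
          (∀ x, (HPaux ρ).1 x → (HPaux τ).2 (cast (congrArg El h) x) (f x)) ∧
          (∀ x y, (HPaux ρ).1 x → (HPaux ρ).1 y → (HPaux ρ).2 x y → (HPaux τ).2 (f x) (f y))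
        else True,
       fun f g =>
        if ρ = τ then ∀ x, (HPaux ρ).1 x → (HPaux τ).2 (f x) (g x)
        else Le (.arrow ρ τ) f g⟩

/-- Hereditarily positive functionals. -/
def Hp (σ : Ty) : El σ → Prop := (HPaux σ).1

/-- The order `≤hp`. -/
def HpLe (σ : Ty) : El σ → El σ → Prop := (HPaux σ).2

/-- `f =hp g` iff `f ≤hp g` and `g ≤hp f`. -/
def HpEq (σ : Ty) (f g : El σ) : Prop := HpLe σ f g ∧ HpLe σ g f

/-- The pair (hereditarily monotone, ≤ on the hereditarily monotone structure),
by recursion on the type.  `f` is hereditarily monotone iff it maps hereditarily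
monotone arguments to hereditarily monotone values, monotonically; the order is
pointwise over hereditarily monotone arguments (i.e. the order of `Ω^mon`). -/
def HMaux : (σ : Ty) → (El σ → Prop) × (El σ → El σ → Prop)
  | .base => ⟨fun _ => True, fun x y => x ≤ y⟩
  | .arrow σ τ =>
      ⟨fun f =>
        (∀ x, (HMaux σ).1 x → (HMaux τ).1 (f x)) ∧
        (∀ x y, (HMaux σ).1 x → (HMaux σ).1 y → (HMaux σ).2 x y → (HMaux τ).2 (f x) (f y)),
       fun f g => ∀ x, (HMaux σ).1 x → (HMaux τ).2 (f x) (g x)⟩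

/-- Hereditarily monotone functionals: the members of the type structure `Ω^mon`. -/
def HM (σ : Ty) : El σ → Prop := (HMaux σ).1

/-- The (pointwise) order of the hereditarily monotone type structure `Ω^mon`. -/
def LeHM (σ : Ty) : El σ → El σ → Prop := (HMaux σ).2

/-- Equality in the hereditarily monotone type structure `Ω^mon`. -/
def EqHM (σ : Ty) (f g : El σ) : Prop := LeHM σ f g ∧ LeHM σ g f


/-! ### Auxiliary lemmas -/

section Aux
open Cardinal

lemma hm_base (x : El .base) : HM .base x := trivial

lemma hm_arrow_iff {σ τ : Ty} (f : El (.arrow σ τ)) :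
    HM (.arrow σ τ) f ↔
      (∀ x, HM σ x → HM τ (f x)) ∧
      (∀ x y, HM σ x → HM σ y → LeHM σ x y → LeHM τ (f x) (f y)) := Iff.rfl

lemma leHM_arrow_iff {σ τ : Ty} (f g : El (.arrow σ τ)) :
    LeHM (.arrow σ τ) f g ↔ ∀ x, HM σ x → LeHM τ (f x) (g x) := Iff.rfl

lemma leHM_base_iff (x y : El .base) : LeHM .base x y ↔ x ≤ y := Iff.rfl

lemma leHM_refl : ∀ (σ : Ty) (x : El σ), HM σ x → LeHM σ x x
  | .base, x, _ => le_refl x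
  | .arrow σ τ, f, hf => fun x hx => leHM_refl τ (f x) (hf.1 x hx)

lemma leHM_trans : ∀ (σ : Ty) {a b c : El σ}, LeHM σ a b → LeHM σ b c → LeHM σ a c
  | .base, _, _, _, h1, h2 => le_trans h1 h2
  | .arrow σ τ, _, _, _, h1, h2 => fun x hx => leHM_trans τ (h1 x hx) (h2 x hx)

lemma bddAbove_om (s : Set Om) : BddAbove (Subtype.val '' s) :=
  ⟨ω₁, by rintro x ⟨y, _, rfl⟩; exact y.2.le⟩

lemma sSup_om_lt {s : Set Om} (hs : s.Countable) : sSup (Subtype.val '' s) < ω₁ := by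
  rcases s.eq_empty_or_nonempty with h | h
  · simp [h, csSup_empty, Ordinal.bot_eq_zero]
    exact omega1_pos
  · obtain ⟨f, rfl⟩ := hs.exists_eq_range h
    have : Subtype.val '' Set.range f = Set.range (fun n => (f n).1) := by
      ext x; simp
    rw [this, ← iSup]
    exact Ordinal.iSup_lt_omega_one (fun n => (f n).2)

lemma supOm_le_supOm {s t : Set Om} (ht : t.Countable)
    (h : ∀ x ∈ s, ∃ y ∈ t, x ≤ y) : supOm s ≤ supOm t := by
  have htlt : sSup (Subtype.val '' t) < ω₁ := sSup_om_lt ht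
  have hss : sSup (Subtype.val '' s) ≤ sSup (Subtype.val '' t) := by
    rcases (Subtype.val '' s).eq_empty_or_nonempty with he | hne
    · simp [he, csSup_empty, Ordinal.bot_eq_zero]
    · refine csSup_le hne ?_
      rintro _ ⟨x, hx, rfl⟩
      obtain ⟨y, hy, hxy⟩ := h x hx
      exact le_trans hxy (le_csSup (bddAbove_om t) ⟨y, hy, rfl⟩)
  have hslt : sSup (Subtype.val '' s) < ω₁ := lt_of_le_of_lt hss htlt
  unfold supOm
  rw [dif_pos htlt, dif_pos hslt]
  exact hss

lemma infOm_le_infOm {s t : Set Om} (h : ∀ y ∈ t, ∃ x ∈ s, x ≤ y)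
    (he : t = ∅ → s = ∅) : infOm s ≤ infOm t := by
  rcases t.eq_empty_or_nonempty with rfl | hne
  · rw [he rfl]
  · show sInf (Subtype.val '' s) ≤ sInf (Subtype.val '' t)
    refine le_csInf (hne.image _) ?_
    rintro _ ⟨y, hy, rfl⟩
    obtain ⟨x, hx, hxy⟩ := h y hy
    exact le_trans (csInf_le (OrderBot.bddBelow _) ⟨x, hx, rfl⟩) hxy

lemma supEl_le_supEl : ∀ (σ : Ty) (S T : Set (El σ)), T.Countable →
    (∀ s ∈ S, ∃ t ∈ T, LeHM σ s t) → LeHM σ (supEl σ S) (supEl σ T)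
  | .base, S, T, hT, h => supOm_le_supOm hT h
  | .arrow σ τ, S, T, hT, h => fun x hx => by
      refine supEl_le_supEl τ _ _ (hT.image _) ?_
      rintro _ ⟨f, hf, rfl⟩
      obtain ⟨g, hg, hfg⟩ := h f hf
      exact ⟨g x, ⟨g, hg, rfl⟩, hfg x hx⟩

lemma infEl_le_infEl : ∀ (σ : Ty) (S T : Set (El σ)),
    (∀ t ∈ T, ∃ s ∈ S, LeHM σ s t) → (T = ∅ → S = ∅) →
    LeHM σ (infEl σ S) (infEl σ T)
  | .base, S, T, h, he => infOm_le_infOm h he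
  | .arrow σ τ, S, T, h, he => fun x hx => by
      refine infEl_le_infEl τ _ _ ?_ ?_
      · rintro _ ⟨g, hg, rfl⟩
        obtain ⟨f, hf, hfg⟩ := h g hg
        exact ⟨f x, ⟨f, hf, rfl⟩, hfg x hx⟩
      · intro h0
        rw [Set.image_eq_empty] at h0
        rw [he h0, Set.image_empty]

lemma hm_supEl : ∀ (σ : Ty) (S : Set (El σ)), S.Countable →
    (∀ f ∈ S, HM σ f) → HM σ (supEl σ S)
  | .base, _, _, _ => trivial
  | .arrow σ τ, S, hc, hS => by
      constructor
      · intro x hx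
        refine hm_supEl τ _ (hc.image _) ?_
        rintro _ ⟨f, hf, rfl⟩
        exact (hS f hf).1 x hx
      · intro x y hx hy hxy
        refine supEl_le_supEl τ _ _ (hc.image _) ?_
        rintro _ ⟨f, hf, rfl⟩
        exact ⟨f y, ⟨f, hf, rfl⟩, (hS f hf).2 x y hx hy hxy⟩

lemma hm_infEl : ∀ (σ : Ty) (S : Set (El σ)),
    (∀ f ∈ S, HM σ f) → HM σ (infEl σ S)
  | .base, _, _ => trivial
  | .arrow σ τ, S, hS => by
      constructor
      · intro x hx
        refine hm_infEl τ _ ?_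
        rintro _ ⟨f, hf, rfl⟩
        exact (hS f hf).1 x hx
      · intro x y hx hy hxy
        refine infEl_le_infEl τ _ _ ?_ ?_
        · rintro _ ⟨f, hf, rfl⟩
          exact ⟨f x, ⟨f, hf, rfl⟩, (hS f hf).2 x y hx hy hxy⟩
        · intro h0
          rw [Set.image_eq_empty] at h0
          rw [h0, Set.image_empty]

lemma countable_seg {μ : Ordinal} (hμ : μ < ω₁) : Countable (Set.Iio μ) := by
  rw [← Cardinal.mk_le_aleph0_iff, Ordinal.mk_Iio_ordinal]
  have h1 : μ < (ℵ_ 1).ord := lt_of_lt_of_eq hμ (Cardinal.ord_aleph 1).symm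
  have h1' := Cardinal.lt_ord.mp h1
  rw [show (1 : Ordinal) = Order.succ 0 from ((zero_add 1).symm.trans (Order.succ_eq_add_one 0).symm),
    Cardinal.aleph_succ, Cardinal.aleph_zero, Order.lt_succ_iff] at h1'
  have h2 : μ.card ≤ ℵ₀ := h1' 
  have h3 := Cardinal.lift_le.mpr h2
  simpa using h3

lemma countable_iter_set {σ : Ty} {μ γ : Ordinal} (hμ : μ < ω₁)
    (F : ∀ ξ : Ordinal, ξ < μ → El σ) :
    Set.Countable {z | ∃ ξ, ∃ h : ξ < μ, γ ≤ ξ ∧ z = F ξ h} := by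
  have := countable_seg hμ
  refine Set.Countable.mono ?_ (Set.countable_range (fun ξ : Set.Iio μ => F ξ.1 ξ.2))
  rintro z ⟨ξ, h, _, rfl⟩
  exact ⟨⟨ξ, h⟩, rfl⟩

lemma hm_limsup {σ : Ty} {μ : Ordinal} (hμ1 : μ < ω₁)
    (F : ∀ ξ : Ordinal, ξ < μ → El σ) (hF : ∀ ξ h, HM σ (F ξ h)) :
    HM σ (limsupEl σ μ F) := by
  refine hm_infEl σ _ ?_
  rintro _ ⟨γ, hγ, rfl⟩
  refine hm_supEl σ _ (countable_iter_set hμ1 F) ?_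
  rintro _ ⟨ξ, h, _, rfl⟩
  exact hF ξ h

lemma limsup_le_limsup {σ : Ty} {μ : Ordinal} (hμ0 : 0 < μ) (hμ1 : μ < ω₁)
    (F G : ∀ ξ : Ordinal, ξ < μ → El σ)
    (h : ∀ ξ (hξ : ξ < μ), LeHM σ (F ξ hξ) (G ξ hξ)) :
    LeHM σ (limsupEl σ μ F) (limsupEl σ μ G) := by
  refine infEl_le_infEl σ _ _ ?_ ?_
  · rintro _ ⟨γ, hγ, rfl⟩
    refine ⟨_, ⟨γ, hγ, rfl⟩, ?_⟩
    refine supEl_le_supEl σ _ _ (countable_iter_set hμ1 G) ?_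
    rintro _ ⟨ξ, hξ, hγξ, rfl⟩
    exact ⟨G ξ hξ, ⟨ξ, hξ, hγξ, rfl⟩, h ξ hξ⟩
  · intro h0
    exact absurd h0 (Set.nonempty_iff_ne_empty.mp ⟨_, 0, hμ0, rfl⟩)

lemma Iter_zero (σ : Ty) (f : El σ → El σ) (x : El σ) : Iter σ 0 f x = x := by
  unfold Iter; rw [Ordinal.limitRecOn_zero]

lemma Iter_succ (σ : Ty) (α : Ordinal) (f : El σ → El σ) (x : El σ) :
    Iter σ (α + 1) f x = f (Iter σ α f x) := by
  unfold Iter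
  rw [Ordinal.add_one_eq_succ, Ordinal.limitRecOn_succ]

lemma Iter_limit (σ : Ty) {μ : Ordinal} (hμ : Order.IsSuccLimit μ) (f : El σ → El σ) (x : El σ) :
    Iter σ μ f x = limsupEl σ μ (fun ξ _ => Iter σ ξ f x) := by
  unfold Iter
  rw [Ordinal.limitRecOn_limit _ _ _ _ hμ]

end Aux

/-- For every finite type `σ` and countable ordinal `α`, the iteration
functional `Iter_α^σ` is hereditarily monotone, i.e. an element of
`Ω^mon_{(σ→σ)→(σ→σ)}`. -/
theorem iter_hm (σ : Ty) (α : Ordinal) (hα : α < ω₁) :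
    HM (.arrow (.arrow σ σ) (.arrow σ σ)) (Iter σ α) := by
  revert hα
  induction α using Ordinal.limitRecOn with
  | zero =>
      intro _
      constructor
      · intro f hf
        constructor
        · intro x hx; rw [Iter_zero]; exact hx
        · intro x y hx hy hxy; rw [Iter_zero, Iter_zero]; exact hxy
      · intro f g hf hg hfg x hx
        rw [Iter_zero, Iter_zero]
        exact leHM_refl σ x hx
  | add_one α ih =>
      intro hα
      have hα' : α < ω₁ := lt_trans (lt_add_one α) hα
      obtain ⟨ih1, ih2⟩ := ih hα'
      constructor
      · intro f hf
        constructor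
        · intro x hx; rw [Iter_succ]
          exact hf.1 _ ((ih1 f hf).1 x hx)
        · intro x y hx hy hxy
          rw [Iter_succ, Iter_succ]
          exact hf.2 _ _ ((ih1 f hf).1 x hx) ((ih1 f hf).1 y hy)
            ((ih1 f hf).2 x y hx hy hxy)
      · intro f g hf hg hfg x hx
        rw [Iter_succ, Iter_succ]
        have h1 : HM σ (Iter σ α f x) := (ih1 f hf).1 x hx
        have h2 : HM σ (Iter σ α g x) := (ih1 g hg).1 x hx
        have h3 : LeHM σ (Iter σ α f x) (Iter σ α g x) := ih2 f g hf hg hfg x hx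
        exact leHM_trans σ (hf.2 _ _ h1 h2 h3) (hfg _ h2)
  | limit μ hμ ih =>
      intro hμ1
      have ihlt : ∀ ξ (h : ξ < μ), ξ < ω₁ := fun ξ h => lt_trans h hμ1
      constructor
      · intro f hf
        constructor
        · intro x hx
          rw [Iter_limit σ hμ]
          exact hm_limsup hμ1 _ (fun ξ h => ((ih ξ h (ihlt ξ h)).1 f hf).1 x hx)
        · intro x y hx hy hxy
          rw [Iter_limit σ hμ, Iter_limit σ hμ]
          exact limsup_le_limsup hμ.pos hμ1 _ _
            (fun ξ h => ((ih ξ h (ihlt ξ h)).1 f hf).2 x y hx hy hxy)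
      · intro f g hf hg hfg x hx
        rw [Iter_limit σ hμ, Iter_limit σ hμ]
        exact limsup_le_limsup hμ.pos hμ1 _ _
          (fun ξ h => (ih ξ h (ihlt ξ h)).2 f g hf hg hfg x hx)


end IterOrd
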